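/- If y ∈ ℂᴺ is a unit eigenvector of the model matrix W = D A Dᵀ with nonzero eigenvalue λ, then y lies in the range of V = (1/√N) D M^{-1/2}, and x = Vᵀ y is a unit eigenvector of A_μ = √M A √M with eigenvalue λ/N. -/

import Mathlib

open scoped BigOperators ComplexConjugate
open Matrix

/-- The `N × n` block indicator matrix, over `ℂ`. -/
def blockD (N n : ℕ) (k : Fin n → ℕ) : Matrix (Fin N) (Fin n) ℂ :=
  Matrix.of fun r j =>
    if (∑ i : Fin n, if (i : ℕ) < (j : ℕ) then k i else 0) ≤ (r : ℕ) ∧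
        (r : ℕ) < (∑ i : Fin n, if (i : ℕ) < (j : ℕ) then k i else 0) + k j
    then 1 else 0

/-- partial sums of block sizes -/
def auxS (n : ℕ) (k : Fin n → ℕ) (m : ℕ) : ℕ := ∑ i : Fin n, if (i : ℕ) < m then k i else 0

lemma auxS_succ (n : ℕ) (k : Fin n → ℕ) (j : Fin n) :
    auxS n k ((j : ℕ) + 1) = auxS n k (j : ℕ) + k j := by
  unfold auxS
  have : ∀ i : Fin n, (if (i:ℕ) < (j:ℕ)+1 then k i else 0)
      = (if (i:ℕ) < (j:ℕ) then k i else 0) + (if i = j then k i else 0) := by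
    intro i
    by_cases h : i = j
    · subst h; simp
    · have : (i:ℕ) ≠ (j:ℕ) := fun hc => h (Fin.ext hc)
      split_ifs <;> omega
  rw [Finset.sum_congr rfl (fun i _ => this i), Finset.sum_add_distrib,
    Finset.sum_ite_eq' Finset.univ j k]
  simp

lemma auxS_mono (n : ℕ) (k : Fin n → ℕ) {m₁ m₂ : ℕ} (h : m₁ ≤ m₂) :
    auxS n k m₁ ≤ auxS n k m₂ := by
  apply Finset.sum_le_sum
  intro i _
  split_ifs <;> omega

lemma auxS_le (n : ℕ) (k : Fin n → ℕ) (m : ℕ) : auxS n k m ≤ ∑ i, k i := by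
  apply Finset.sum_le_sum
  intro i _
  split_ifs <;> omega

lemma card_interval (N a b : ℕ) (hb : b ≤ N) :
    (Finset.univ.filter (fun r : Fin N => a ≤ (r:ℕ) ∧ (r:ℕ) < b)).card = b - a := by
  rw [← Nat.card_Ico a b]
  apply Finset.card_nbij (fun r : Fin N => (r : ℕ))
  · intro r hr
    simp only [Finset.mem_coe, Finset.mem_filter] at hr
    simp [Finset.mem_Ico, hr.2.1, hr.2.2]
  · intro r₁ _ r₂ _ h
    exact Fin.ext h
  · intro m hm
    simp only [Finset.coe_Ico, Set.mem_Ico] at hm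
    exact ⟨⟨m, lt_of_lt_of_le hm.2 hb⟩, by simp [hm.1, hm.2], rfl⟩

lemma blockD_tmul (N n : ℕ) (k : Fin n → ℕ) (hksum : ∑ i, k i = N) :
    (blockD N n k)ᵀ * blockD N n k = Matrix.diagonal (fun i => (k i : ℂ)) := by
  ext i j
  rw [Matrix.mul_apply]
  simp only [transpose_apply, blockD, Matrix.of_apply]
  have hfold : ∀ m : ℕ, (∑ i : Fin n, if (i : ℕ) < m then k i else 0) = auxS n k m :=
    fun _ => rfl
  simp only [hfold]
  have hterm : ∀ r : Fin N,
      (if auxS n k (i:ℕ) ≤ (r:ℕ) ∧ (r:ℕ) < auxS n k (i:ℕ) + k i then (1:ℂ) else 0) *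
      (if auxS n k (j:ℕ) ≤ (r:ℕ) ∧ (r:ℕ) < auxS n k (j:ℕ) + k j then (1:ℂ) else 0)
      = if (auxS n k (i:ℕ) ≤ (r:ℕ) ∧ (r:ℕ) < auxS n k (i:ℕ) + k i) ∧
          (auxS n k (j:ℕ) ≤ (r:ℕ) ∧ (r:ℕ) < auxS n k (j:ℕ) + k j) then 1 else 0 := by
    intro r; split_ifs <;> simp_all
  simp only [hterm]
  by_cases hij : i = j
  · subst hij
    have : ∀ r : Fin N, ((auxS n k (i:ℕ) ≤ (r:ℕ) ∧ (r:ℕ) < auxS n k (i:ℕ) + k i) ∧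
        (auxS n k (i:ℕ) ≤ (r:ℕ) ∧ (r:ℕ) < auxS n k (i:ℕ) + k i)) ↔
        (auxS n k (i:ℕ) ≤ (r:ℕ) ∧ (r:ℕ) < auxS n k (i:ℕ) + k i) := fun r => by tauto
    simp only [this]
    rw [Finset.sum_boole]
    have hb : auxS n k (i:ℕ) + k i ≤ N := by
      rw [← auxS_succ]
      calc auxS n k ((i:ℕ)+1) ≤ ∑ l, k l := auxS_le n k _
        _ = N := hksum
    rw [card_interval N _ _ hb]
    simp [Matrix.diagonal]
  · have hdisj : ∀ r : Fin N, ¬ ((auxS n k (i:ℕ) ≤ (r:ℕ) ∧ (r:ℕ) < auxS n k (i:ℕ) + k i) ∧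
        (auxS n k (j:ℕ) ≤ (r:ℕ) ∧ (r:ℕ) < auxS n k (j:ℕ) + k j)) := by
      intro r ⟨⟨h1, h2⟩, ⟨h3, h4⟩⟩
      rcases lt_or_gt_of_ne (fun hc : (i:ℕ) = (j:ℕ) => hij (Fin.ext hc)) with h | h
      · have : auxS n k (i:ℕ) + k i ≤ auxS n k (j:ℕ) := by
          rw [← auxS_succ]; exact auxS_mono n k h
        omega
      · have : auxS n k (j:ℕ) + k j ≤ auxS n k (i:ℕ) := by
          rw [← auxS_succ]; exact auxS_mono n k h
        omega
    simp only [hdisj, if_false, Finset.sum_const_zero]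
    rw [Matrix.diagonal_apply_ne _ hij]

/-- a unit `λ`-eigenvector `y` of `W = D A Dᵀ` (with `λ ≠ 0`) lies in the
range of `V = (1/√N) D M^{-1/2}`, and `x = Vᵀ y` is a unit `(λ/N)`-eigenvector of
`A_μ = √M A √M`. -/
theorem eigvec_W_to_eigvec_Amu (N n : ℕ) (hN : 0 < N) (hn : 0 < n)
    (μ : Fin n → ℝ) (hμpos : ∀ i, 0 < μ i) (hμsum : ∑ i, μ i = 1)
    (k : Fin n → ℕ) (hkpos : ∀ i, 0 < k i)
    (hk : ∀ i, (k i : ℝ) = μ i * N) (hksum : ∑ i, k i = N)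
    (A : Matrix (Fin n) (Fin n) ℝ) (hA : A.IsSymm)
    (W : Matrix (Fin N) (Fin N) ℂ)
    (hW : W = blockD N n k * A.map (Complex.ofReal) * (blockD N n k)ᵀ)
    (Aμ : Matrix (Fin n) (Fin n) ℂ)
    (hAμ : Aμ = Matrix.diagonal (fun i => (Real.sqrt (μ i) : ℂ)) * A.map (Complex.ofReal) *
        Matrix.diagonal (fun i => (Real.sqrt (μ i) : ℂ)))
    (V : Matrix (Fin N) (Fin n) ℂ)
    (hV : V = ((Real.sqrt N : ℂ))⁻¹ •
        (blockD N n k * Matrix.diagonal fun i => ((Real.sqrt (μ i))⁻¹ : ℂ)))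
    (lam : ℝ) (hlam : lam ≠ 0)
    (y : Fin N → ℂ) (hy_unit : star y ⬝ᵥ y = 1)
    (hy_eig : W.mulVec y = (lam : ℂ) • y) :
    (∃ x₀ : Fin n → ℂ, y = V.mulVec x₀) ∧
      star (Vᵀ.mulVec y) ⬝ᵥ (Vᵀ.mulVec y) = 1 ∧
      Aμ.mulVec (Vᵀ.mulVec y) = ((lam / N : ℝ) : ℂ) • (Vᵀ.mulVec y) := by
  have hN0 : (N : ℂ) ≠ 0 := Nat.cast_ne_zero.mpr hN.ne'
  have hlam0 : (lam : ℂ) ≠ 0 := Complex.ofReal_ne_zero.mpr hlam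
  set D := blockD N n k with hDdef
  set E := Matrix.diagonal (fun i => ((Real.sqrt (μ i))⁻¹ : ℂ)) with hEdef
  set F := Matrix.diagonal (fun i => ((Real.sqrt (μ i)) : ℂ)) with hFdef
  set Am := A.map (Complex.ofReal) with hAmdef
  have hDtD : Dᵀ * D = Matrix.diagonal (fun i => (k i : ℂ)) := blockD_tmul N n k hksum
  have hc2 : ((Real.sqrt N : ℂ))⁻¹ * ((Real.sqrt N : ℂ))⁻¹ = (N : ℂ)⁻¹ := by
    rw [← mul_inv, ← Complex.ofReal_mul, Real.mul_self_sqrt (Nat.cast_nonneg N)]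
    norm_num
  -- real scalar facts
  have hsq : ∀ i, Real.sqrt (μ i) * Real.sqrt (μ i) = μ i :=
    fun i => Real.mul_self_sqrt (hμpos i).le
  have hsne : ∀ i, Real.sqrt (μ i) ≠ 0 :=
    fun i => (Real.sqrt_pos.mpr (hμpos i)).ne'
  have r1 : ∀ i, (Real.sqrt (μ i))⁻¹ * (Real.sqrt (μ i))⁻¹ * (k i : ℝ) = N := by
    intro i
    rw [hk i, ← mul_inv, hsq i]
    field_simp
    exact div_self (hμpos i).ne'
  have r2 : ∀ i, (Real.sqrt (μ i))⁻¹ * (k i : ℝ) = Real.sqrt (μ i) * N := by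
    intro i
    rw [hk i]
    field_simp [hsne i]
    nlinarith [hsq i]
  have s1 : ∀ i, ((Real.sqrt (μ i) : ℂ))⁻¹ * ((Real.sqrt (μ i) : ℂ))⁻¹ * (k i : ℂ) = (N : ℂ) := by
    intro i
    have := congrArg (fun t : ℝ => (t : ℂ)) (r1 i)
    push_cast at this
    exact this
  have s2 : ∀ i, ((Real.sqrt (μ i) : ℂ))⁻¹ * (k i : ℂ) = (Real.sqrt (μ i) : ℂ) * N := by
    intro i
    have := congrArg (fun t : ℝ => (t : ℂ)) (r2 i)
    push_cast at this
    exact this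
  -- E * E * diag k = N • 1 (as constant diagonal)
  have hEEk : E * E * Matrix.diagonal (fun i => (k i : ℂ))
      = Matrix.diagonal (fun _ : Fin n => (N : ℂ)) := by
    rw [hEdef, Matrix.diagonal_mul_diagonal, Matrix.diagonal_mul_diagonal]
    exact congrArg Matrix.diagonal (funext s1)
  have hEk : E * Matrix.diagonal (fun i => (k i : ℂ)) = (N : ℂ) • F := by
    rw [hEdef, hFdef, Matrix.diagonal_mul_diagonal]
    ext a b
    by_cases h : a = b
    · subst h
      simp only [Matrix.diagonal_apply_eq, Matrix.smul_apply, smul_eq_mul]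
      linear_combination s2 a
    · simp [Matrix.diagonal_apply_ne _ h]
  have hkE : Matrix.diagonal (fun i => (k i : ℂ)) * E = (N : ℂ) • F := by
    rw [hEdef, hFdef, Matrix.diagonal_mul_diagonal]
    ext a b
    by_cases h : a = b
    · subst h
      simp only [Matrix.diagonal_apply_eq, Matrix.smul_apply, smul_eq_mul]
      linear_combination s2 a
    · simp [Matrix.diagonal_apply_ne _ h]
  -- projection fact
  have hP : V * Vᵀ * D = D := by
    rw [hV, Matrix.transpose_smul, Matrix.transpose_mul, Matrix.diagonal_transpose, ← hEdef]
    simp only [Matrix.smul_mul, Matrix.mul_smul, smul_smul]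
    rw [hc2]
    have h1 : D * E * (E * Dᵀ) * D = D * (E * E * (Dᵀ * D)) := by
      simp only [Matrix.mul_assoc]
    rw [h1, hDtD, hEEk]
    have h2 : D * Matrix.diagonal (fun _ : Fin n => (N : ℂ)) = (N : ℂ) • D := by
      ext r i
      simp [Matrix.mul_diagonal, mul_comm]
    rw [h2, smul_smul, inv_mul_cancel₀ hN0, one_smul]
  have hWP : V * Vᵀ * W = W := by
    rw [hW]
    have : V * Vᵀ * (D * Am * Dᵀ) = (V * Vᵀ * D) * Am * Dᵀ := by
      simp only [Matrix.mul_assoc]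
    rw [this, hP]
  have hyW : y = (lam : ℂ)⁻¹ • W.mulVec y := by
    rw [hy_eig, smul_smul, inv_mul_cancel₀ hlam0, one_smul]
  have hPy : V.mulVec (Vᵀ.mulVec y) = y := by
    conv_lhs => rw [hyW]
    rw [Matrix.mulVec_smul, Matrix.mulVec_smul, Matrix.mulVec_mulVec, Matrix.mulVec_mulVec,
      hWP, ← hyW]
  -- V real-entried
  have hVtH : Vᵀᴴ = V := by
    rw [hV]
    ext r i
    simp only [Matrix.conjTranspose_apply, Matrix.transpose_apply, Matrix.smul_apply,
      smul_eq_mul, hEdef, hDdef, Matrix.mul_diagonal, blockD, Matrix.of_apply, star_mul',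
      star_inv₀, Complex.star_def, Complex.conj_ofReal, apply_ite (⇑(starRingEnd ℂ)),
      _root_.map_one, _root_.map_zero]
  -- Vᵀ W V = N • Aμ
  have h3 : Vᵀ * W * V = (N : ℂ) • Aμ := by
    rw [hV, hW, hAμ, Matrix.transpose_smul, Matrix.transpose_mul, Matrix.diagonal_transpose,
      ← hEdef]
    simp only [Matrix.smul_mul, Matrix.mul_smul, smul_smul]
    rw [hc2]
    have h1 : E * Dᵀ * (D * Am * Dᵀ) * (D * E) = (E * (Dᵀ * D)) * Am * ((Dᵀ * D) * E) := by
      simp only [Matrix.mul_assoc]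
    rw [h1, hDtD, hEk, hkE]
    simp only [Matrix.smul_mul, Matrix.mul_smul, smul_smul]
    congr 1
    field_simp
  refine ⟨⟨Vᵀ.mulVec y, hPy.symm⟩, ?_, ?_⟩
  · rw [Matrix.star_mulVec, hVtH, ← Matrix.dotProduct_mulVec, hPy, hy_unit]
  · have hAμ' : Aμ = (N : ℂ)⁻¹ • (Vᵀ * W * V) := by
      rw [h3, smul_smul, inv_mul_cancel₀ hN0, one_smul]
    rw [hAμ', Matrix.smul_mulVec, ← Matrix.mulVec_mulVec, ← Matrix.mulVec_mulVec,
      hPy, hy_eig, Matrix.mulVec_smul, smul_smul]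
    congr 1
    push_cast
    field_simp
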